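/- Let P, P' ⊆ ℝ² be nonempty open bounded convex polygons and let x_c be a vertex of P such that dist(x_c, P') = d_H(P, P'), where d_H denotes Hausdorff distance. If Q is the convex hull of P ∪ P', then x_c is an extreme point (vertex) of Q. -/
import Mathlib


open Metric Set

private lemma dist_combo {E : Type*} [NormedAddCommGroup E] [NormedSpace ℝ E]
    {t : ℝ} (h0 : 0 ≤ t) (h1 : t ≤ 1) (y z p q : E) :
    dist ((1 - t) • y + t • z) ((1 - t) • p + t • q)
      ≤ (1 - t) * dist y p + t * dist z q := by
  calc dist ((1 - t) • y + t • z) ((1 - t) • p + t • q)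
      ≤ dist ((1 - t) • y) ((1 - t) • p) + dist (t • z) (t • q) := dist_add_add_le _ _ _ _
    _ = (1 - t) * dist y p + t * dist z q := by
        rw [dist_smul₀, dist_smul₀, Real.norm_eq_abs, Real.norm_eq_abs,
          abs_of_nonneg (by linarith), abs_of_nonneg h0]

theorem stmt_12 (P P' : Set (EuclideanSpace ℝ (Fin 2)))
    (hPne : P.Nonempty) (hP'ne : P'.Nonempty)
    (hPo : IsOpen P) (hP'o : IsOpen P')
    (hPb : Bornology.IsBounded P) (hP'b : Bornology.IsBounded P')
    (hPc : Convex ℝ P) (hP'c : Convex ℝ P')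
    (hPpoly : ∃ F : Finset (EuclideanSpace ℝ (Fin 2)),
      closure P = convexHull ℝ (F : Set (EuclideanSpace ℝ (Fin 2))))
    (hP'poly : ∃ F : Finset (EuclideanSpace ℝ (Fin 2)),
      closure P' = convexHull ℝ (F : Set (EuclideanSpace ℝ (Fin 2))))
    (x_c : EuclideanSpace ℝ (Fin 2))
    (hvert : x_c ∈ Set.extremePoints ℝ (closure P))
    (hdist : Metric.infDist x_c P' = Metric.hausdorffDist P P') :
    x_c ∈ Set.extremePoints ℝ (closure (convexHull ℝ (P ∪ P'))) := by
  set d := Metric.hausdorffDist P P' with hd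
  have hedist : EMetric.hausdorffEdist P P' ≠ ⊤ :=
    Metric.hausdorffEdist_ne_top_of_nonempty_of_bounded hPne hP'ne hPb hP'b
  have hKP : IsCompact (closure P) := hPb.isCompact_closure
  have hKP' : IsCompact (closure P') := hP'b.isCompact_closure
  -- the closure of the hull is the convex join of the two closures
  have hcjeq : convexHull ℝ (closure P ∪ closure P')
      = convexJoin ℝ (closure P) (closure P') :=
    hPc.closure.convexHull_union hP'c.closure hPne.closure hP'ne.closure
  have hcjcompact : IsCompact (convexJoin ℝ (closure P) (closure P')) := by
    have himg : convexJoin ℝ (closure P) (closure P')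
        = (fun pt : ℝ × (EuclideanSpace ℝ (Fin 2)) × (EuclideanSpace ℝ (Fin 2)) =>
            (1 - pt.1) • pt.2.1 + pt.1 • pt.2.2) '' (Icc (0:ℝ) 1 ×ˢ closure P ×ˢ closure P') := by
      ext x
      simp only [mem_convexJoin, Set.mem_image, Set.mem_prod]
      constructor
      · rintro ⟨a, ha, b, hb, hx⟩
        rw [segment_eq_image ℝ a b] at hx
        obtain ⟨t, ht, hx⟩ := hx
        exact ⟨(t, a, b), ⟨ht, ha, hb⟩, hx⟩
      · rintro ⟨⟨t, a, b⟩, ⟨ht, ha, hb⟩, hx⟩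
        refine ⟨a, ha, b, hb, ?_⟩
        rw [segment_eq_image ℝ a b]
        exact ⟨t, ht, hx⟩
    rw [himg]
    exact ((isCompact_Icc.prod (hKP.prod hKP')).image (by fun_prop))
  have hQeq : closure (convexHull ℝ (P ∪ P')) = convexJoin ℝ (closure P) (closure P') := by
    apply Subset.antisymm
    · apply closure_minimal _ hcjcompact.isClosed
      rw [← hcjeq]
      exact convexHull_mono (union_subset_union subset_closure subset_closure)
    · rw [← hcjeq]
      apply convexHull_min _ ((convex_convexHull ℝ (P ∪ P')).closure)
      refine union_subset (closure_mono ?_) (closure_mono ?_)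
      · exact subset_union_left.trans (subset_convexHull ℝ _)
      · exact subset_union_right.trans (subset_convexHull ℝ _)
  rcases eq_or_lt_of_le (Metric.hausdorffDist_nonneg : (0:ℝ) ≤ d) with h0 | hdpos
  · -- d = 0 : the two closures coincide
    have hPP' : closure P = closure P' :=
      (Metric.hausdorffDist_zero_iff_closure_eq_closure hedist).1 h0.symm
    have : closure (convexHull ℝ (P ∪ P')) = closure P := by
      rw [hQeq, ← hPP',
        ← hPc.closure.convexHull_union hPc.closure hPne.closure hPne.closure, union_self,
        hPc.closure.convexHull_eq]
    rw [this]; exact hvert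
  · -- d > 0
    -- distance bound on the join
    have hlecl : ∀ y ∈ closure P, Metric.infDist y P' ≤ d := by
      intro y hy
      refine closure_minimal (fun z hz => ?_)
        (isClosed_le (continuous_infDist_pt P') continuous_const) hy
      exact Metric.infDist_le_hausdorffDist_of_mem hz hedist
    have hbound : ∀ t : ℝ, 0 ≤ t → t ≤ 1 → ∀ a ∈ closure P, ∀ b ∈ closure P',
        Metric.infDist ((1 - t) • a + t • b) P' ≤ (1 - t) * d := by
      intro t ht0 ht1 a ha b hb
      obtain ⟨a', ha', haa'⟩ := hKP'.exists_infDist_eq_dist hP'ne.closure a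
      have hmem : (1 - t) • a' + t • b ∈ closure P' :=
        hP'c.closure ha' hb (by linarith) ht0 (by ring)
      calc Metric.infDist ((1 - t) • a + t • b) P'
          = Metric.infDist ((1 - t) • a + t • b) (closure P') := (Metric.infDist_closure).symm
        _ ≤ dist ((1 - t) • a + t • b) ((1 - t) • a' + t • b) :=
            Metric.infDist_le_dist_of_mem hmem
        _ ≤ (1 - t) * dist a a' + t * dist b b := dist_combo ht0 ht1 a b a' b
        _ = (1 - t) * Metric.infDist a (closure P') := by rw [haa']; simp
        _ = (1 - t) * Metric.infDist a P' := by rw [Metric.infDist_closure]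
        _ ≤ (1 - t) * d := by
            have := hlecl a ha
            nlinarith [this]
    have hQle : ∀ y ∈ convexJoin ℝ (closure P) (closure P'), Metric.infDist y P' ≤ d := by
      intro y hy
      rw [mem_convexJoin] at hy
      obtain ⟨a, ha, b, hb, hy⟩ := hy
      rw [segment_eq_image ℝ a b] at hy
      obtain ⟨t, ⟨ht0, ht1⟩, rfl⟩ := hy
      exact (hbound t ht0 ht1 a ha b hb).trans (by nlinarith)
    -- points of the join at distance exactly d lie in closure P
    have hface : ∀ y ∈ convexJoin ℝ (closure P) (closure P'),
        Metric.infDist y P' = d → y ∈ closure P := by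
      intro y hy hyd
      rw [mem_convexJoin] at hy
      obtain ⟨a, ha, b, hb, hy⟩ := hy
      rw [segment_eq_image ℝ a b] at hy
      obtain ⟨t, ⟨ht0, ht1⟩, rfl⟩ := hy
      have := hbound t ht0 ht1 a ha b hb
      have ht : t = 0 := by nlinarith
      subst ht
      simpa using ha
    rw [hQeq]
    refine ⟨subset_convexJoin_left hP'ne.closure hvert.1, ?_⟩
    intro y hy z hz hseg
    -- infDist is midpoint-concave-bounded along the segment: both endpoints attain d
    rw [openSegment_eq_image ℝ y z] at hseg
    obtain ⟨t, ⟨ht0, ht1⟩, hx⟩ := hseg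
    have hfy := hQle y hy
    have hfz := hQle z hz
    obtain ⟨p, hp, hyp⟩ := hKP'.exists_infDist_eq_dist hP'ne.closure y
    obtain ⟨q, hq, hzq⟩ := hKP'.exists_infDist_eq_dist hP'ne.closure z
    have hmem : (1 - t) • p + t • q ∈ closure P' :=
      hP'c.closure hp hq (by linarith) (le_of_lt ht0) (by ring)
    have hcomb : Metric.infDist x_c P' ≤
        (1 - t) * Metric.infDist y P' + t * Metric.infDist z P' := by
      calc Metric.infDist x_c P' = Metric.infDist x_c (closure P') :=
            (Metric.infDist_closure).symm
        _ ≤ dist x_c ((1 - t) • p + t • q) := Metric.infDist_le_dist_of_mem hmem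
        _ ≤ (1 - t) * dist y p + t * dist z q := by
            rw [← hx]; exact dist_combo (le_of_lt ht0) (le_of_lt ht1) y z p q
        _ = (1 - t) * Metric.infDist y (closure P') + t * Metric.infDist z (closure P') := by
            rw [hyp, hzq]
        _ = _ := by rw [Metric.infDist_closure, Metric.infDist_closure]
    rw [hdist] at hcomb
    have hfy' : Metric.infDist y P' = d := by nlinarith
    have hfz' : Metric.infDist z P' = d := by nlinarith
    have hyP : y ∈ closure P := hface y hy hfy'
    have hzP : z ∈ closure P := hface z hz hfz'
    have hxseg : x_c ∈ openSegment ℝ y z := by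
      rw [openSegment_eq_image ℝ y z]; exact ⟨t, ⟨ht0, ht1⟩, hx⟩
    exact hvert.2 hyP hzP hxseg
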